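/- Let α₀, α₁, α₂ ∈ ℂ, let U ⊆ ℂ be a nonempty open set, and let f₀, f₁, f₂ : U → ℂ be holomorphic functions satisfying the symmetric PIV system with constants (α₀,α₁,α₂), with f₂ nowhere zero on U. Then f₂ satisfies on U the second-order equation f₂'' = (f₂')²/(2f₂) + (3/2)f₂³ − 2t f₂² + (t²/2 + (α₀ − α₁)) f₂ − α₂²/(2f₂). -/

import Mathlib

/-- If holomorphic `f₀,f₁,f₂` satisfy the symmetric PIV system with constants
`(α₀,α₁,α₂)` on a nonempty open set `U` and `f₂` is nowhere zero, then `f₂`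
satisfies
`f₂'' = (f₂')²/(2f₂) + (3/2)f₂³ − 2t f₂² + (t²/2 + (α₀ − α₁)) f₂ − α₂²/(2f₂)` on `U`. -/
theorem stmt_17 (α₀ α₁ α₂ : ℂ) (U : Set ℂ) (hU : IsOpen U) (hne : U.Nonempty)
    (f₀ f₁ f₂ : ℂ → ℂ)
    (hf₀ : ∀ t ∈ U, DifferentiableAt ℂ f₀ t)
    (hf₁ : ∀ t ∈ U, DifferentiableAt ℂ f₁ t)
    (hf₂ : ∀ t ∈ U, DifferentiableAt ℂ f₂ t)
    (hsum : ∀ t ∈ U, f₀ t + f₁ t + f₂ t = t)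
    (heq₀ : ∀ t ∈ U, deriv f₀ t = f₀ t * (f₁ t - f₂ t) + α₀)
    (heq₁ : ∀ t ∈ U, deriv f₁ t = f₁ t * (f₂ t - f₀ t) + α₁)
    (heq₂ : ∀ t ∈ U, deriv f₂ t = f₂ t * (f₀ t - f₁ t) + α₂)
    (hnz : ∀ t ∈ U, f₂ t ≠ 0) :
    ∀ t ∈ U, deriv (deriv f₂) t =
      (deriv f₂ t) ^ 2 / (2 * f₂ t) + (3/2) * (f₂ t) ^ 3 - 2 * t * (f₂ t) ^ 2
        + (t ^ 2 / 2 + (α₀ - α₁)) * f₂ t - α₂ ^ 2 / (2 * f₂ t) := by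
  intro t ht
  have hmem : U ∈ nhds t := hU.mem_nhds ht
  have hEq : deriv f₂ =ᶠ[nhds t] fun s => f₂ s * (f₀ s - f₁ s) + α₂ :=
    Filter.eventuallyEq_of_mem hmem heq₂
  have h1 : deriv (deriv f₂) t
      = deriv (fun s => f₂ s * (f₀ s - f₁ s) + α₂) t := hEq.deriv_eq
  have hD : DifferentiableAt ℂ (fun s => f₀ s - f₁ s) t := (hf₀ t ht).sub (hf₁ t ht)
  have h2 : deriv (fun s => f₂ s * (f₀ s - f₁ s) + α₂) t
      = deriv f₂ t * (f₀ t - f₁ t) + f₂ t * (deriv f₀ t - deriv f₁ t) := by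
    rw [deriv_add_const, deriv_fun_mul (hf₂ t ht) hD, deriv_fun_sub (hf₀ t ht) (hf₁ t ht)]
  rw [h1, h2, heq₀ t ht, heq₁ t ht, heq₂ t ht]
  have hs := hsum t ht
  have hc := hnz t ht
  have hb : f₁ t = t - f₂ t - f₀ t := by linear_combination hs
  have hc2 : (2 : ℂ) * f₂ t ≠ 0 := mul_ne_zero two_ne_zero hc
  have hR : (f₂ t * (f₀ t - f₁ t) + α₂) ^ 2 / (2 * f₂ t) + (3/2) * (f₂ t) ^ 3
      - 2 * t * (f₂ t) ^ 2 + (t ^ 2 / 2 + (α₀ - α₁)) * f₂ t - α₂ ^ 2 / (2 * f₂ t)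
      = ((f₂ t * (f₀ t - f₁ t) + α₂) ^ 2 + 3 * (f₂ t) ^ 4 - 4 * t * (f₂ t) ^ 3
        + (t ^ 2 + 2 * (α₀ - α₁)) * (f₂ t) ^ 2 - α₂ ^ 2) / (2 * f₂ t) := by
    field_simp
    ring
  rw [hR, eq_div_iff hc2, hb]
  ring
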